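/- Region crossing change is an unknotting operation on knot diagrams: any knot diagram can be transformed into a diagram of the trivial knot by a finite sequence of region crossing changes (without Reidemeister moves). -/

import Mathlib

/-!
STATEMENT 8: region crossing change is an unknotting operation on knot
diagrams: any knot diagram can be transformed into a diagram of the trivial
knot by a finite sequence of region crossing changes (without Reidemeister
moves).

A knot diagram is modelled faithfully by a rotation system.  A *dart* is a
pair `(v, i)`: the `i`-th edge-end (in counterclockwise cyclic order) at the
crossing `v`.  The fixed-point-free involution `α` pairs the two ends of each
edge of the underlying 4-valent graph; `opp` sends a dart to the opposite dart
at the same crossing (continuing along the same strand).  The diagram is a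
*knot* diagram when the relation generated by `α` and `opp` relates all darts
(the underlying curve has a single component), and it is *planar* (lies on
`S²`) when Euler's formula holds: the face permutation `α.trans rot` has
exactly `n + 2` orbits.  Regions are the orbits of the face permutation, and
`M R c` is the parity of the number of corners (darts) of the region `R` at
the crossing `c`.  Region crossing changes at a finite set `P` of regions add
`∑_{R ∈ P} M R ·` to the over/under vector in `F₂ = ZMod 2`.
-/

open Equiv

abbrev Dart (n : ℕ) := Fin n × Fin 4

/-- the rotation of darts around a crossing -/
def rot (n : ℕ) : Equiv.Perm (Dart n) :=
  (Equiv.refl (Fin n)).prodCongr (Equiv.addRight (1 : Fin 4))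

/-- the opposite dart at the same crossing (same strand) -/
def opp (n : ℕ) : Equiv.Perm (Dart n) :=
  (Equiv.refl (Fin n)).prodCongr (Equiv.addRight (2 : Fin 4))

/-- the setoid whose classes are the cycles (orbits) of a permutation -/
def cycleSetoid {β : Type*} (f : Equiv.Perm β) : Setoid β :=
  ⟨f.SameCycle, ⟨fun _ => Equiv.Perm.SameCycle.refl f _,
    Equiv.Perm.SameCycle.symm, Equiv.Perm.SameCycle.trans⟩⟩

/-- a knot diagram with `n` crossings, encoded by a rotation system -/
structure KnotDiagram (n : ℕ) where
  pos : 0 < n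
  /-- the fixed-point-free involution pairing the two ends of each edge -/
  α : Equiv.Perm (Dart n)
  invol : ∀ d, α (α d) = d
  no_fix : ∀ d, α d ≠ d
  /-- the underlying curve has a single component (it is a knot diagram) -/
  oneComponent : ∀ d d' : Dart n,
    Relation.EqvGen (fun x y => y = α x ∨ y = opp n x) d d'
  /-- planarity via Euler's formula: the face permutation has `n + 2` orbits -/
  planar : Nat.card (Quotient (cycleSetoid (α.trans (rot n)))) = n + 2

/-- the regions (faces) of a knot diagram -/
def KnotDiagram.Region {n : ℕ} (D : KnotDiagram n) : Type :=
  Quotient (cycleSetoid (D.α.trans (rot n)))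

/-- the region in whose boundary a given dart (corner) lies -/
def KnotDiagram.regionOf {n : ℕ} (D : KnotDiagram n) (d : Dart n) : D.Region :=
  Quotient.mk _ d

/-- the region-crossing incidence matrix over `F₂`: the parity of the number
of corners of region `R` at crossing `c` -/
noncomputable def KnotDiagram.M {n : ℕ} (D : KnotDiagram n) (R : D.Region) (c : Fin n) :
    ZMod 2 :=
  (Nat.card {i : Fin 4 // D.regionOf (c, i) = R} : ZMod 2)

/-- the effect of region crossing changes at a set `P` of regions on the
crossing `c` -/
noncomputable def KnotDiagram.effect {n : ℕ} (D : KnotDiagram n) (P : Finset D.Region)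
    (c : Fin n) : ZMod 2 :=
  ∑ R ∈ P, D.M R c

-- ==== auxiliary development ====

instance KD.finiteRegion {n : ℕ} (D : KnotDiagram n) : Finite D.Region :=
  Quotient.finite _

/-- basic coordinates of rot/opp -/
lemma rot_apply {n : ℕ} (d : Dart n) : rot n d = (d.1, d.2 + 1) := rfl
lemma opp_apply {n : ℕ} (d : Dart n) : opp n d = (d.1, d.2 + 2) := rfl


lemma regionOf_face {n : ℕ} (D : KnotDiagram n) (d : Dart n) :
    D.regionOf (D.α d) = D.regionOf (rot n d) := by
  apply Quotient.sound
  show Equiv.Perm.SameCycle (D.α.trans (rot n)) (D.α d) (rot n d)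
  exact ⟨1, by simp [Equiv.trans_apply, D.invol]⟩

/-- the key propagation lemma -/
lemma key {n : ℕ} (D : KnotDiagram n) (x : D.Region → ZMod 2)
    (hker : ∀ c : Fin n, ∑ i : Fin 4, x (D.regionOf (c, i)) = 0)
    (d0 : Dart n) (h0 : x (D.regionOf d0) = 0) (h1 : x (D.regionOf (D.α d0)) = 0) :
    x = 0 := by
  set g : Dart n → ZMod 2 := fun d => x (D.regionOf d) + x (D.regionOf (D.α d)) with hg
  have hg2 : ∀ d, g d = x (D.regionOf d) + x (D.regionOf (rot n d)) := by
    intro d; simp only [hg]; rw [regionOf_face]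
  have gα : ∀ d, g (D.α d) = g d := by
    intro d; simp only [hg, D.invol]; exact add_comm _ _
  have hshift : ∀ c : Fin n, ∀ a : Fin 4,
      ∑ i : Fin 4, x (D.regionOf (c, a + i)) = 0 := by
    intro c a
    rw [Fintype.sum_equiv (Equiv.addLeft a) (fun i => x (D.regionOf (c, a + i)))
      (fun i => x (D.regionOf (c, i))) (fun i => rfl)]
    exact hker c
  have gsum : ∀ d : Dart n, g d + g (opp n d) = 0 := by
    intro d
    have h4 := hshift d.1 d.2
    rw [Fin.sum_univ_four] at h4
    have e1 : ∀ a : Fin 4, a + 2 + 1 = a + 3 := by decide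
    have e0 : ∀ a : Fin 4, a + 0 = a := by decide
    rw [hg2, hg2, rot_apply, opp_apply, rot_apply]
    simp only [e1]
    calc x (D.regionOf d) + x (D.regionOf (d.1, d.2 + 1))
          + (x (D.regionOf (d.1, d.2 + 2)) + x (D.regionOf (d.1, d.2 + 3)))
        = x (D.regionOf (d.1, d.2 + 0)) + x (D.regionOf (d.1, d.2 + 1))
          + x (D.regionOf (d.1, d.2 + 2)) + x (D.regionOf (d.1, d.2 + 3)) := by
          rw [e0]; ring
      _ = 0 := by rw [← h4]
  have gopp : ∀ d, g (opp n d) = g d := by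
    intro d
    have h := eq_neg_of_add_eq_zero_right (gsum d)
    rw [h, CharTwo.neg_eq]
  have gconst : ∀ d, g d = g d0 := by
    intro d
    have hstep : ∀ a b : Dart n,
        Relation.EqvGen (fun x y => y = D.α x ∨ y = opp n x) a b → g a = g b := by
      intro a b hab
      induction hab with
      | rel a b hab => rcases hab with h | h <;> rw [h] <;>
          [exact (gα a).symm; exact (gopp a).symm]
      | refl => rfl
      | symm _ _ _ ih => exact ih.symm
      | trans _ _ _ _ _ ih1 ih2 => exact ih1.trans ih2
    exact (hstep d0 d (D.oneComponent d0 d)).symm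
  have g0 : ∀ d, g d = 0 := by
    intro d; rw [gconst d]; simp only [hg]; rw [h0, h1]; ring
  have xα : ∀ d, x (D.regionOf (D.α d)) = x (D.regionOf d) := by
    intro d
    have h := g0 d
    simp only [hg] at h
    have h2 := eq_neg_of_add_eq_zero_right h
    rw [h2, CharTwo.neg_eq]
  have xrot : ∀ d, x (D.regionOf (rot n d)) = x (D.regionOf d) := by
    intro d; rw [← regionOf_face]; exact xα d
  have xopp : ∀ d, x (D.regionOf (opp n d)) = x (D.regionOf d) := by
    intro d
    have hoppd : opp n d = rot n (rot n d) := by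
      rw [rot_apply, rot_apply, opp_apply]
      have : ∀ a : Fin 4, a + 2 = a + 1 + 1 := by decide
      rw [this]
    rw [hoppd, xrot, xrot]
  have xconst : ∀ d, x (D.regionOf d) = 0 := by
    intro d
    have hstep : ∀ a b : Dart n,
        Relation.EqvGen (fun x y => y = D.α x ∨ y = opp n x) a b →
        x (D.regionOf a) = x (D.regionOf b) := by
      intro a b hab
      induction hab with
      | rel a b hab => rcases hab with h | h <;> rw [h] <;>
          [exact (xα a).symm; exact (xopp a).symm]
      | refl => rfl
      | symm _ _ _ ih => exact ih.symm
      | trans _ _ _ _ _ ih1 ih2 => exact ih1.trans ih2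
    rw [← hstep d0 d (D.oneComponent d0 d)]; exact h0
  funext R
  induction R using Quotient.inductionOn with
  | h d => exact xconst d

noncomputable def phi {n : ℕ} (D : KnotDiagram n) :
    (D.Region → ZMod 2) →ₗ[ZMod 2] (Fin n → ZMod 2) where
  toFun x := fun c => ∑ i : Fin 4, x (D.regionOf (c, i))
  map_add' x y := by funext c; simp [Finset.sum_add_distrib]
  map_smul' m x := by funext c; simp [Finset.mul_sum]

open Classical in
lemma effect_eq {n : ℕ} (D : KnotDiagram n) (P : Finset D.Region) (c : Fin n) :
    D.effect P c = phi D (fun R => if R ∈ P then 1 else 0) c := by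
  unfold KnotDiagram.effect KnotDiagram.M
  show _ = ∑ i : Fin 4, (if D.regionOf (c, i) ∈ P then (1 : ZMod 2) else 0)
  have hM : ∀ R : D.Region, (Nat.card {i : Fin 4 // D.regionOf (c, i) = R} : ZMod 2)
      = ∑ i : Fin 4, if D.regionOf (c, i) = R then (1 : ZMod 2) else 0 := by
    intro R
    rw [Nat.card_eq_fintype_card, Fintype.card_subtype, Finset.card_filter]
    push_cast
    simp
  simp only [hM]
  rw [Finset.sum_comm]
  congr 1
  funext i
  exact Finset.sum_ite_eq P (D.regionOf (c, i)) (fun _ => (1 : ZMod 2))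

lemma phi_surj {n : ℕ} (D : KnotDiagram n) : Function.Surjective (phi D) := by
  classical
  haveI : Fintype D.Region := Fintype.ofFinite _
  haveI : Fact (Nat.Prime 2) := ⟨Nat.prime_two⟩
  set d0 : Dart n := (⟨0, D.pos⟩, 0) with hd0
  -- kernel has at most 4 elements
  have hinj : Function.Injective (fun x : LinearMap.ker (phi D) =>
      ((x : D.Region → ZMod 2) (D.regionOf d0),
       (x : D.Region → ZMod 2) (D.regionOf (D.α d0)))) := by
    rintro ⟨x, hx⟩ ⟨y, hy⟩ h
    simp only [Prod.mk.injEq] at h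
    have hxy : x - y = 0 := by
      refine key D (x - y) (fun c => ?_) d0 ?_ ?_
      · have : phi D (x - y) = 0 := by
          rw [map_sub, LinearMap.mem_ker.mp hx, LinearMap.mem_ker.mp hy, sub_zero]
        exact congrFun this c
      · simp [h.1]
      · simp [h.2]
    exact Subtype.ext (sub_eq_zero.mp hxy)
  have hcard : Nat.card (LinearMap.ker (phi D)) ≤ 4 := by
    calc Nat.card (LinearMap.ker (phi D))
        ≤ Nat.card (ZMod 2 × ZMod 2) := Nat.card_le_card_of_injective _ hinj
      _ = 4 := by simp [Nat.card_eq_fintype_card]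
  have hkerdim : Module.finrank (ZMod 2) (LinearMap.ker (phi D)) ≤ 2 := by
    haveI : Fintype (LinearMap.ker (phi D)) := Fintype.ofFinite _
    have hpow : Nat.card (LinearMap.ker (phi D))
        = 2 ^ Module.finrank (ZMod 2) (LinearMap.ker (phi D)) := by
      have := Module.card_eq_pow_finrank (K := ZMod 2) (V := LinearMap.ker (phi D))
      simpa [Nat.card_eq_fintype_card, ZMod.card] using this
    by_contra hcon
    push_neg at hcon
    have : 2 ^ 3 ≤ 2 ^ Module.finrank (ZMod 2) (LinearMap.ker (phi D)) :=
      Nat.pow_le_pow_right (by norm_num) hcon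
    omega
  have hdom : Module.finrank (ZMod 2) (D.Region → ZMod 2) = n + 2 := by
    rw [Module.finrank_pi, ← Nat.card_eq_fintype_card]
    exact D.planar
  have hrank := LinearMap.finrank_range_add_finrank_ker (phi D)
  rw [hdom] at hrank
  have hle : n ≤ Module.finrank (ZMod 2) (LinearMap.range (phi D)) := by omega
  have htop : Module.finrank (ZMod 2) (Fin n → ZMod 2) = n := by
    simp [Module.finrank_pi]
  have heq : LinearMap.range (phi D) = ⊤ := by
    apply Submodule.eq_top_of_finrank_eq
    refine le_antisymm (Submodule.finrank_le _) ?_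
    rw [htop]; exact hle
  rw [← LinearMap.range_eq_top]
  exact heq

/-- The over/under data of the diagram is a vector `over : Fin n → ZMod 2`
(for each crossing, which strand is on top).  `Unknotted v` is the predicate
that the underlying curve of `D`, equipped with the over/under data `v`,
is a diagram of the trivial knot.  The hypothesis `hcc` is the classical fact
that a crossing change is an unknotting operation: some assignment of
over/under data to the underlying curve of `D` yields a trivial knot diagram
(i.e. `D` can be unknotted by crossing changes).

Conclusion: some finite sequence of region crossing changes transforms `D`
into a diagram of the trivial knot. -/
theorem region_crossing_change_is_unknotting_operation
    {n : ℕ} (D : KnotDiagram n) (ovr : Fin n → ZMod 2)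
    (Unknotted : (Fin n → ZMod 2) → Prop)
    (hcc : ∃ w : Fin n → ZMod 2, Unknotted w) :
    ∃ P : Finset D.Region,
      Unknotted (fun c => ovr c + D.effect P c) := by
  classical
  haveI : Fintype D.Region := Fintype.ofFinite _
  obtain ⟨w, hw⟩ := hcc
  obtain ⟨x, hx⟩ := phi_surj D (fun c => w c - ovr c)
  refine ⟨Finset.univ.filter (fun R => x R = 1), ?_⟩
  set P := Finset.univ.filter (fun R => x R = 1) with hP
  have hind : phi D (fun R => if R ∈ P then (1 : ZMod 2) else 0) = phi D x := by
    congr 1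
    funext R
    by_cases hR : R ∈ P
    · simp only [hR, if_true]
      exact ((Finset.mem_filter.mp hR).2).symm
    · simp only [hR, if_false]
      have hne : x R ≠ 1 := fun hc => hR (Finset.mem_filter.mpr ⟨Finset.mem_univ R, hc⟩)
      have : ∀ z : ZMod 2, z ≠ 1 → 0 = z := by decide
      exact this _ hne
  have hfun : (fun c => ovr c + D.effect P c) = w := by
    funext c
    rw [effect_eq]
    have h1 : phi D (fun R => if R ∈ P then (1 : ZMod 2) else 0) c
        = w c - ovr c := by
      rw [hind, hx]
    rw [h1]
    ring
  rw [hfun]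
  exact hw
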